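/- A point x* ∈ S attains the minimum of x ↦ f(x)/g(x) over S if and only if x* attains the minimum of x ↦ f(x) − θ̄ g(x) over S, where θ̄ = min_{x ∈ S} f(x)/g(x). -/
import Mathlib

theorem dinkelbach_same_minimizers
    {n : ℕ} (hn : 1 ≤ n)
    (S : Set (EuclideanSpace ℝ (Fin n))) (hS : S.Nonempty) (hSc : IsCompact S)
    (f g : EuclideanSpace ℝ (Fin n) → ℝ)
    (hf : Continuous f) (hg : Continuous g) (hgpos : ∀ x ∈ S, 0 < g x)
    (θbar : ℝ) (hθbar : IsLeast ((fun x => f x / g x) '' S) θbar)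
    (xstar : EuclideanSpace ℝ (Fin n)) (hxstar : xstar ∈ S) :
    (∀ x ∈ S, f xstar / g xstar ≤ f x / g x) ↔
      (∀ x ∈ S, f xstar - θbar * g xstar ≤ f x - θbar * g x) := by
  obtain ⟨⟨y, hy, hyeq⟩, hlb⟩ := hθbar
  have hkey : ∀ x ∈ S, (f x / g x = θbar ↔ f x - θbar * g x = 0) := by
    intro x hx
    have hgx := hgpos x hx
    rw [div_eq_iff hgx.ne', sub_eq_zero, mul_comm]
  have hnonneg : ∀ x ∈ S, 0 ≤ f x - θbar * g x := by
    intro x hx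
    have := hlb ⟨x, hx, rfl⟩
    have hgx := hgpos x hx
    nlinarith [(div_le_iff₀ hgx).mp (le_refl (f x / g x)),
      (le_div_iff₀ hgx).mp this]
  have hy0 : f y - θbar * g y = 0 := (hkey y hy).mp hyeq
  constructor
  · intro h x hx
    have hle : f xstar / g xstar ≤ θbar := hyeq ▸ h y hy
    have hge : θbar ≤ f xstar / g xstar := hlb ⟨xstar, hxstar, rfl⟩
    have h0 : f xstar - θbar * g xstar = 0 := (hkey xstar hxstar).mp (le_antisymm hle hge)
    rw [h0]; exact hnonneg x hx
  · intro h x hx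
    have h0 : f xstar - θbar * g xstar = 0 :=
      le_antisymm (hy0 ▸ h y hy) (hnonneg xstar hxstar)
    have : f xstar / g xstar = θbar := (hkey xstar hxstar).mpr h0
    rw [this]; exact hlb ⟨x, hx, rfl⟩
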